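/- Let X be a metric space, f: X → ℝ∪{+∞}, φ: ℝ → ℝ∪{+∞} nondecreasing, x ∈ dom f with f(x) ∈ dom φ, and φ differentiable at f(x) with φ'(f(x)) > 0. Then the slope of the composition satisfies |∇(φ∘f)|(x) = φ'(f(x))·|∇f|(x). -/

import Mathlib

open Filter EMetric Set Topology
open scoped ENNReal NNReal

noncomputable def epos (a : EReal) : ℝ≥0∞ := if a = ⊤ then ⊤ else ENNReal.ofReal a.toReal

noncomputable def nslope {X : Type*} [MetricSpace X] (f : X → EReal) (x : X) : ℝ≥0∞ :=
  ⨆ u ∈ {u : X | u ≠ x}, epos (f x - max (f u) 0) / edist u x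

noncomputable def lslope {X : Type*} [MetricSpace X] (f : X → EReal) (x : X) : ℝ≥0∞ :=
  Filter.limsup (fun u => epos (f x - f u) / edist u x) (𝓝[≠] x)

private lemma epos_coe (r : ℝ) : epos (r : EReal) = ENNReal.ofReal r := by
  simp [epos]

private lemma epos_bot : epos (⊥ : EReal) = 0 := by
  simp [epos]

private lemma epos_coe_sub_coe (r s : ℝ) :
    epos ((r : EReal) - (s : EReal)) = ENNReal.ofReal (r - s) := by
  rw [← EReal.coe_sub, epos_coe]

private lemma epos_coe_sub_eq_zero {r : ℝ} {c : EReal} (h : (r : EReal) ≤ c) :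
    epos ((r : EReal) - c) = 0 := by
  rcases eq_or_ne c ⊤ with rfl | hT
  · rw [EReal.sub_top]; exact epos_bot
  · have hc : c ≠ ⊥ := fun hb => by
      rw [hb] at h
      exact (EReal.coe_ne_bot r) (le_bot_iff.mp h)
    have hco : c = ((c.toReal : ℝ) : EReal) := (EReal.coe_toReal hT hc).symm
    rw [hco] at h ⊢
    rw [epos_coe_sub_coe, ENNReal.ofReal_eq_zero]
    have := EReal.coe_le_coe_iff.mp h
    linarith

private lemma le_epos_sub (r s : ℝ) {c : EReal} (hc : c ≠ ⊥) (hcs : c ≤ (s : EReal)) :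
    ENNReal.ofReal (r - s) ≤ epos ((r : EReal) - c) := by
  rcases eq_or_ne c ⊤ with rfl | hT
  · exact absurd hcs (by simp)
  · have hco : c = ((c.toReal : ℝ) : EReal) := (EReal.coe_toReal hT hc).symm
    rw [hco] at hcs ⊢
    rw [epos_coe_sub_coe]
    have := EReal.coe_le_coe_iff.mp hcs
    exact ENNReal.ofReal_le_ofReal (by linarith)

private lemma limsup_min_eq {α : Type*} {l : Filter α} {F h : α → ℝ≥0∞}
    (hh : Tendsto h l (𝓝 ⊤)) :
    Filter.limsup (fun u => min (F u) (h u)) l = Filter.limsup F l := by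
  refine le_antisymm
    (Filter.limsup_le_limsup (Eventually.of_forall fun u => min_le_left _ _)) ?_
  rw [Filter.limsup_eq, Filter.limsup_eq]
  refine sInf_le_sInf fun b hb => ?_
  simp only [Set.mem_setOf_eq] at hb ⊢
  rcases eq_or_ne b ⊤ with rfl | hb'
  · exact Eventually.of_forall fun _ => le_top
  · have h2 : ∀ᶠ u in l, b < h u := hh.eventually (lt_mem_nhds hb'.lt_top)
    filter_upwards [hb, h2] with u h1 h3
    rcases min_cases (F u) (h u) with ⟨he, _⟩ | ⟨he, _⟩
    · rwa [he] at h1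
    · rw [he] at h1
      exact absurd h1 h3.not_ge

/-- chain rule for slopes, `|∇(φ∘f)|(x) = φ'(f(x))·|∇f|(x)`, for a nondecreasing
function `φ : ℝ → ℝ∪{+∞}` which is finite and differentiable at `f(x)` with positive derivative
(differentiability of the extended-real-valued `φ` at `f(x)` is expressed via a real-valued
local representative `ψ`). -/
theorem slope_comp {X : Type*} [MetricSpace X] (f : X → EReal) (hbot : ∀ u, f u ≠ ⊥)
    (x : X) (hdom : f x ≠ ⊤)
    (φ : ℝ → EReal) (hφmono : Monotone φ) (hφbot : ∀ t, φ t ≠ ⊥)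
    (hφdom : φ (f x).toReal ≠ ⊤)
    (ψ : ℝ → ℝ) (d : ℝ) (hψ : ∀ᶠ t in nhds (f x).toReal, φ t = (ψ t : EReal))
    (hder : HasDerivAt ψ d (f x).toReal) (hd : 0 < d) :
    lslope (fun u => if f u = ⊤ then (⊤ : EReal) else φ ((f u).toReal)) x =
      ENNReal.ofReal d * lslope f x := by
  classical
  set a := (f x).toReal with ha
  have hfx : f x = (a : EReal) := by
    rw [ha]; exact (EReal.coe_toReal hdom (hbot x)).symm
  have hψa : φ a = (ψ a : EReal) := hψ.self_of_nhds
  set F : X → ℝ≥0∞ := fun u => epos (f x - f u) / edist u x with hFdef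
  set G : X → ℝ≥0∞ := fun u =>
    epos ((ψ a : EReal) - (if f u = ⊤ then (⊤ : EReal) else φ ((f u).toReal))) / edist u x
    with hGdef
  set S := Filter.limsup F (𝓝[≠] x) with hSdef
  -- the δ-package coming from differentiability of ψ and locality of ψ vs φ
  have hδpack : ∀ ε : ℝ, 0 < ε → ∃ δ : ℝ, 0 < δ ∧
      (∀ t : ℝ, |t - a| ≤ δ → φ t = (ψ t : EReal)) ∧
      (∀ t : ℝ, a - δ ≤ t → t < a →
        (d - ε) * (a - t) ≤ ψ a - ψ t ∧ ψ a - ψ t ≤ (d + ε) * (a - t)) := by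
    intro ε hε
    have h1 : ∀ᶠ t in 𝓝[≠] a, dist (slope ψ a t) d < ε :=
      (Metric.tendsto_nhds.mp (hasDerivAt_iff_tendsto_slope.mp hder)) ε hε
    rw [eventually_nhdsWithin_iff] at h1
    have h2 : ∀ᶠ t in 𝓝 a,
        (t ∈ ({a}ᶜ : Set ℝ) → dist (slope ψ a t) d < ε) ∧ φ t = (ψ t : EReal) := h1.and hψ
    rw [Metric.eventually_nhds_iff] at h2
    obtain ⟨δ1, hδ1, hball⟩ := h2
    refine ⟨δ1 / 2, by positivity, ?_, ?_⟩
    · intro t ht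
      have hd1 : dist t a < δ1 := by
        rw [Real.dist_eq]; linarith [ht]
      exact (hball hd1).2
    · intro t h3 h4
      have hd1 : dist t a < δ1 := by
        rw [Real.dist_eq, abs_of_nonpos (by linarith)]; linarith
      have hs := (hball hd1).1 (Set.mem_compl_singleton_iff.mpr h4.ne)
      rw [Real.dist_eq, abs_lt] at hs
      have hne : t - a ≠ 0 := sub_ne_zero.mpr h4.ne
      have key : slope ψ a t * (a - t) = ψ a - ψ t := by
        rw [slope_def_field]
        field_simp
        ring
      constructor
      · calc (d - ε) * (a - t) ≤ slope ψ a t * (a - t) :=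
              mul_le_mul_of_nonneg_right (by linarith [hs.1]) (by linarith)
          _ = ψ a - ψ t := key
      · calc ψ a - ψ t = slope ψ a t * (a - t) := key.symm
          _ ≤ (d + ε) * (a - t) := mul_le_mul_of_nonneg_right (by linarith [hs.2]) (by linarith)
  -- pointwise computations of F and G
  have hFtop : ∀ u, f u = ⊤ → F u = 0 := by
    intro u hu
    simp only [hFdef]
    rw [hu, EReal.sub_top, epos_bot, ENNReal.zero_div]
  have hFval : ∀ u, f u ≠ ⊤ → F u = ENNReal.ofReal (a - (f u).toReal) / edist u x := by
    intro u hu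
    have hcoe : f u = (((f u).toReal : ℝ) : EReal) := (EReal.coe_toReal hu (hbot u)).symm
    simp only [hFdef]
    rw [hfx]
    conv_lhs => rw [hcoe]
    rw [epos_coe_sub_coe]
  have hGtop : ∀ u, f u = ⊤ → G u = 0 := by
    intro u hu
    simp only [hGdef]
    rw [if_pos hu, EReal.sub_top, epos_bot, ENNReal.zero_div]
  have hGzero : ∀ u, f u ≠ ⊤ → a ≤ (f u).toReal → G u = 0 := by
    intro u hu hle
    have h1 : (ψ a : EReal) ≤ φ ((f u).toReal) := by
      rw [← hψa]; exact hφmono hle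
    simp only [hGdef]
    rw [if_neg hu, epos_coe_sub_eq_zero h1, ENNReal.zero_div]
  -- upper bound for each ε
  have upper : ∀ ε : ℝ, 0 < ε →
      Filter.limsup G (𝓝[≠] x) ≤ ENNReal.ofReal (d + ε) * S := by
    intro ε hε
    obtain ⟨δ, hδ, hδψ', hδd⟩ := hδpack ε hε
    have hGval : ∀ u, f u ≠ ⊤ → (f u).toReal < a → a - (f u).toReal ≤ δ →
        G u = ENNReal.ofReal (ψ a - ψ ((f u).toReal)) / edist u x := by
      intro u hu h1 h2
      have hψt : φ ((f u).toReal) = (ψ ((f u).toReal) : EReal) :=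
        hδψ' _ (abs_le.mpr ⟨by linarith, by linarith⟩)
      simp only [hGdef]
      rw [if_neg hu, hψt, epos_coe_sub_coe]
    rcases eq_or_ne S ⊤ with hS | hS
    · rw [hS, ENNReal.mul_top (ENNReal.ofReal_pos.mpr (by linarith)).ne']
      exact le_top
    · have hS1 : S + 1 ≠ 0 := by simp
      have hS2 : S + 1 ≠ ⊤ := ENNReal.add_ne_top.mpr ⟨hS, ENNReal.one_ne_top⟩
      have hev1 : ∀ᶠ u in 𝓝[≠] x, F u < S + 1 :=
        Filter.eventually_lt_of_limsup_lt (ENNReal.lt_add_right hS one_ne_zero)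
      have hev2 : ∀ᶠ u in 𝓝[≠] x, edist u x < ENNReal.ofReal δ / (S + 1) := by
        have hc : (0 : ℝ≥0∞) < ENNReal.ofReal δ / (S + 1) :=
          ENNReal.div_pos (ENNReal.ofReal_pos.mpr hδ).ne' hS2
        exact eventually_nhdsWithin_of_eventually_nhds
          (eventually_of_mem (EMetric.ball_mem_nhds x hc) fun u hu => EMetric.mem_ball.mp hu)
      have hle : ∀ᶠ u in 𝓝[≠] x, G u ≤ ENNReal.ofReal (d + ε) * F u := by
        filter_upwards [hev1, hev2, self_mem_nhdsWithin] with u h1 h2 hux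
        have hne : u ≠ x := fun h => hux (by simp [h])
        by_cases hu : f u = ⊤
        · rw [hGtop u hu]; exact zero_le
        by_cases hta : a ≤ (f u).toReal
        · rw [hGzero u hu hta]; exact zero_le
        push_neg at hta
        have he0 : edist u x ≠ 0 := fun h => hne (by rwa [edist_eq_zero] at h)
        have heT : edist u x ≠ ⊤ := edist_ne_top u x
        have hFu := hFval u hu
        have hat : a - (f u).toReal ≤ δ := by
          have h3 : ENNReal.ofReal (a - (f u).toReal) ≤ (S + 1) * edist u x := by
            rw [hFu] at h1
            exact (ENNReal.div_le_iff he0 heT).mp h1.le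
          have h4 : (S + 1) * edist u x ≤ ENNReal.ofReal δ := by
            calc (S + 1) * edist u x ≤ (S + 1) * (ENNReal.ofReal δ / (S + 1)) :=
                  mul_le_mul_right h2.le _
              _ = ENNReal.ofReal δ := ENNReal.mul_div_cancel hS1 hS2
          exact (ENNReal.ofReal_le_ofReal_iff hδ.le).mp (h3.trans h4)
        rw [hGval u hu hta hat, hFu, ← mul_div_assoc]
        refine ENNReal.div_le_div_right ?_ _
        rw [← ENNReal.ofReal_mul (by linarith : (0:ℝ) ≤ d + ε)]
        exact ENNReal.ofReal_le_ofReal (hδd _ (by linarith) hta).2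
      calc Filter.limsup G (𝓝[≠] x)
          ≤ Filter.limsup (fun u => ENNReal.ofReal (d + ε) * F u) (𝓝[≠] x) :=
            Filter.limsup_le_limsup hle
        _ = ENNReal.ofReal (d + ε) * S :=
            ENNReal.limsup_const_mul_of_ne_top ENNReal.ofReal_ne_top
  -- lower bound for each ε
  have lower : ∀ ε : ℝ, 0 < ε → ε < d →
      ENNReal.ofReal (d - ε) * S ≤ Filter.limsup G (𝓝[≠] x) := by
    intro ε hε hεd
    obtain ⟨δ, hδ, hδψ', hδd⟩ := hδpack ε hε
    have hGval : ∀ u, f u ≠ ⊤ → (f u).toReal < a → a - (f u).toReal ≤ δ →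
        G u = ENNReal.ofReal (ψ a - ψ ((f u).toReal)) / edist u x := by
      intro u hu h1 h2
      have hψt : φ ((f u).toReal) = (ψ ((f u).toReal) : EReal) :=
        hδψ' _ (abs_le.mpr ⟨by linarith, by linarith⟩)
      simp only [hGdef]
      rw [if_neg hu, hψt, epos_coe_sub_coe]
    have hGfar : ∀ u, f u ≠ ⊤ → (f u).toReal ≤ a - δ →
        ENNReal.ofReal ((d - ε) * δ) / edist u x ≤ G u := by
      intro u hu ht
      have hψδ : φ (a - δ) = (ψ (a - δ) : EReal) := by
        refine hδψ' _ ?_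
        rw [show a - δ - a = -δ by ring, abs_neg, abs_of_nonneg hδ.le]
      have hmono : φ ((f u).toReal) ≤ (ψ (a - δ) : EReal) := hψδ ▸ hφmono ht
      have hnum : ENNReal.ofReal (ψ a - ψ (a - δ)) ≤
          epos ((ψ a : EReal) - φ ((f u).toReal)) :=
        le_epos_sub _ _ (hφbot _) hmono
      have hge : (d - ε) * δ ≤ ψ a - ψ (a - δ) := by
        have h := (hδd (a - δ) le_rfl (by linarith)).1
        rw [show a - (a - δ) = δ by ring] at h
        exact h
      simp only [hGdef]
      rw [if_neg hu]
      exact ENNReal.div_le_div_right ((ENNReal.ofReal_le_ofReal hge).trans hnum) _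
    have htop : Tendsto (fun u : X => ENNReal.ofReal δ / edist u x) (𝓝[≠] x) (𝓝 ⊤) := by
      apply ENNReal.tendsto_nhds_top
      intro n
      have hnT : ((n : ℝ≥0∞) + 1) ≠ ⊤ := ENNReal.add_ne_top.mpr ⟨ENNReal.natCast_ne_top n, ENNReal.one_ne_top⟩
      have hc : (0 : ℝ≥0∞) < ENNReal.ofReal δ / ((n : ℝ≥0∞) + 1) :=
        ENNReal.div_pos (ENNReal.ofReal_pos.mpr hδ).ne' hnT
      have hev : ∀ᶠ u in 𝓝[≠] x, edist u x < ENNReal.ofReal δ / ((n : ℝ≥0∞) + 1) :=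
        eventually_nhdsWithin_of_eventually_nhds
          (eventually_of_mem (EMetric.ball_mem_nhds x hc) fun u hu => EMetric.mem_ball.mp hu)
      filter_upwards [hev, self_mem_nhdsWithin] with u h1 hux
      have hne : u ≠ x := fun h => hux (by simp [h])
      have he0 : edist u x ≠ 0 := fun h => hne (by rwa [edist_eq_zero] at h)
      rw [ENNReal.lt_div_iff_mul_lt (Or.inl he0) (Or.inl (edist_ne_top u x))]
      have h2 : edist u x * ((n : ℝ≥0∞) + 1) < ENNReal.ofReal δ :=
        (ENNReal.lt_div_iff_mul_lt (Or.inl (by simp)) (Or.inr he0)).mp h1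
      calc (n : ℝ≥0∞) * edist u x ≤ edist u x * ((n : ℝ≥0∞) + 1) := by
            rw [mul_comm]; exact mul_le_mul_right le_self_add _
        _ < ENNReal.ofReal δ := h2
    have hpt : ∀ᶠ u in 𝓝[≠] x,
        ENNReal.ofReal (d - ε) * min (F u) (ENNReal.ofReal δ / edist u x) ≤ G u := by
      filter_upwards [self_mem_nhdsWithin] with u hux
      by_cases hu : f u = ⊤
      · rw [hFtop u hu, min_eq_left (zero_le), mul_zero]
        exact zero_le
      by_cases hta : a ≤ (f u).toReal
      · have hF0 : F u = 0 := by
          rw [hFval u hu]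
          rw [show ENNReal.ofReal (a - (f u).toReal) = 0 by
            rw [ENNReal.ofReal_eq_zero]; linarith]
          exact ENNReal.zero_div
        rw [hF0, min_eq_left (zero_le), mul_zero]
        exact zero_le
      push_neg at hta
      by_cases hfar : a - (f u).toReal ≤ δ
      · have h5 : ENNReal.ofReal (d - ε) * F u ≤ G u := by
          rw [hGval u hu hta hfar, hFval u hu, ← mul_div_assoc]
          refine ENNReal.div_le_div_right ?_ _
          rw [← ENNReal.ofReal_mul (by linarith : (0:ℝ) ≤ d - ε)]
          exact ENNReal.ofReal_le_ofReal (hδd _ (by linarith) hta).1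
        exact le_trans (mul_le_mul_right (min_le_left _ _) _) h5
      · push_neg at hfar
        have h5 : ENNReal.ofReal (d - ε) * (ENNReal.ofReal δ / edist u x) ≤ G u := by
          refine le_trans ?_ (hGfar u hu (by linarith))
          rw [← mul_div_assoc, ← ENNReal.ofReal_mul (by linarith : (0:ℝ) ≤ d - ε)]
        exact le_trans (mul_le_mul_right (min_le_right _ _) _) h5
    calc ENNReal.ofReal (d - ε) * S
        = ENNReal.ofReal (d - ε) *
            Filter.limsup (fun u => min (F u) (ENNReal.ofReal δ / edist u x)) (𝓝[≠] x) := by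
          rw [limsup_min_eq htop, ← hSdef]
      _ = Filter.limsup
            (fun u => ENNReal.ofReal (d - ε) * min (F u) (ENNReal.ofReal δ / edist u x))
            (𝓝[≠] x) :=
          (ENNReal.limsup_const_mul_of_ne_top ENNReal.ofReal_ne_top).symm
      _ ≤ Filter.limsup G (𝓝[≠] x) := Filter.limsup_le_limsup hpt
  -- pass to the limit ε → 0
  have hupper : Filter.limsup G (𝓝[≠] x) ≤ ENNReal.ofReal d * S := by
    have h2 : Tendsto (fun ε : ℝ => d + ε) (𝓝[>] (0:ℝ)) (𝓝 d) := by
      have h : Tendsto (fun ε : ℝ => d + ε) (𝓝 (0:ℝ)) (𝓝 (d + 0)) :=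
        tendsto_const_nhds.add tendsto_id
      rw [add_zero] at h
      exact h.mono_left nhdsWithin_le_nhds
    have h1 : Tendsto (fun ε : ℝ => ENNReal.ofReal (d + ε) * S) (𝓝[>] (0:ℝ))
        (𝓝 (ENNReal.ofReal d * S)) :=
      ENNReal.Tendsto.mul_const ((ENNReal.continuous_ofReal.tendsto d).comp h2)
        (Or.inl (ENNReal.ofReal_pos.mpr hd).ne')
    refine ge_of_tendsto h1 ?_
    filter_upwards [self_mem_nhdsWithin] with ε hε
    exact upper ε hε
  have hlower : ENNReal.ofReal d * S ≤ Filter.limsup G (𝓝[≠] x) := by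
    have h2 : Tendsto (fun ε : ℝ => d - ε) (𝓝[>] (0:ℝ)) (𝓝 d) := by
      have h : Tendsto (fun ε : ℝ => d - ε) (𝓝 (0:ℝ)) (𝓝 (d - 0)) :=
        tendsto_const_nhds.sub tendsto_id
      rw [sub_zero] at h
      exact h.mono_left nhdsWithin_le_nhds
    have h1 : Tendsto (fun ε : ℝ => ENNReal.ofReal (d - ε) * S) (𝓝[>] (0:ℝ))
        (𝓝 (ENNReal.ofReal d * S)) :=
      ENNReal.Tendsto.mul_const ((ENNReal.continuous_ofReal.tendsto d).comp h2)
        (Or.inl (ENNReal.ofReal_pos.mpr hd).ne')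
    refine le_of_tendsto h1 ?_
    filter_upwards [Ioo_mem_nhdsGT_of_mem ⟨le_refl (0:ℝ), hd⟩] with ε hε
    exact lower ε hε.1 hε.2
  have hLHS : lslope (fun u => if f u = ⊤ then (⊤ : EReal) else φ ((f u).toReal)) x
      = Filter.limsup G (𝓝[≠] x) := by
    rw [hGdef]
    unfold lslope
    congr 1
    funext u
    beta_reduce
    rw [if_neg hdom, ← ha, hψa]
  have hRHS : lslope f x = S := by
    rw [hSdef, hFdef]; rfl
  rw [hLHS, hRHS]
  exact le_antisymm hupper hlower
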